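/- For a nonzero linear functional a on V that is atomic in the effect cone and a complete orthogonal idempotent family {B_j}_{j∈Y} (B_jB_{j'} = δ_{jj'}B_j, Σ_j B_j = id_V) such that each a∘B_j is again an effect, there exists a unique j̄ ∈ Y with a∘B_{j̄} = a and a∘B_j = 0 for all j ≠ j̄. -/

import Mathlib

/-- for a nonzero atomic effect a in an effect cone K closed
under precomposition with a complete orthogonal idempotent family {B_j}, there
is a unique j̄ with a∘B_{j̄} = a and a∘B_j = 0 for all j ≠ j̄. -/
theorem atomic_effect_unique_block
    {V : Type} [AddCommGroup V] [Module ℝ V] [FiniteDimensional ℝ V]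
    {Y : Type} [Fintype Y]
    (B : Y → V →ₗ[ℝ] V)
    (horth : ∀ j j', j ≠ j' → (B j).comp (B j') = 0)
    (hidem : ∀ j, (B j).comp (B j) = B j)
    (hsum : ∑ j, B j = LinearMap.id)
    (K : Set (V →ₗ[ℝ] ℝ))
    (hKclosed : ∀ c ∈ K, ∀ j, c.comp (B j) ∈ K)
    (a : V →ₗ[ℝ] ℝ) (haK : a ∈ K) (ha0 : a ≠ 0)
    (hatomic : ∀ (n : ℕ) (ak : Fin n → V →ₗ[ℝ] ℝ),
      (∀ k, ak k ∈ K) → ∑ k, ak k = a →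
      ∀ k, ∃ c : ℝ, 0 ≤ c ∧ ak k = c • a) :
    ∃! j0 : Y, a.comp (B j0) = a ∧ ∀ j, j ≠ j0 → a.comp (B j) = 0 := by
  classical
  set n := Fintype.card Y with hn
  obtain ⟨e⟩ : Nonempty (Y ≃ Fin n) := ⟨Fintype.equivFin Y⟩
  -- sum of a ∘ B j = a
  have hsuma : ∑ j, a.comp (B j) = a := by
    ext v
    calc (∑ j, a.comp (B j)) v = ∑ j, a ((B j) v) := by
          simp [LinearMap.sum_apply]
      _ = a ((∑ j, B j) v) := by rw [LinearMap.sum_apply, map_sum]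
      _ = a v := by rw [hsum]; rfl
  have hsum' : ∑ k : Fin n, a.comp (B (e.symm k)) = a :=
    (Fintype.sum_equiv e.symm _ _ (fun _ => rfl)).trans hsuma
  have hmem : ∀ k : Fin n, a.comp (B (e.symm k)) ∈ K := fun k =>
    hKclosed a haK _
  have hc : ∀ j : Y, ∃ c : ℝ, 0 ≤ c ∧ a.comp (B j) = c • a := by
    intro j
    obtain ⟨c, hc0, hceq⟩ := hatomic n _ hmem hsum' (e j)
    exact ⟨c, hc0, by simpa using hceq⟩
  choose c hc0 hceq using hc
  -- idempotence => c j ^ 2 = c j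
  have hsq : ∀ j, c j * c j = c j := by
    intro j
    have h1 : (a.comp (B j)).comp (B j) = a.comp (B j) := by
      rw [LinearMap.comp_assoc, hidem]
    rw [hceq j] at h1
    have h2 : (c j * c j) • a = c j • a := by
      calc (c j * c j) • a = c j • (c j • a) := by rw [mul_smul]
        _ = c j • a.comp (B j) := by rw [hceq j]
        _ = (c j • a).comp (B j) := rfl
        _ = c j • a := h1
    by_contra hne
    have : (c j * c j - c j) • a = 0 := (sub_smul (c j * c j) (c j) a).trans (sub_eq_zero.mpr h2)
    rcases smul_eq_zero.mp this with h | h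
    · exact hne (by linarith [sub_eq_zero.mp h])
    · exact ha0 h
  have hc01 : ∀ j, c j = 0 ∨ c j = 1 := by
    intro j
    have := hsq j
    have h0 : c j * (c j - 1) = 0 := by ring_nf; linarith
    rcases mul_eq_zero.mp h0 with h | h
    · exact Or.inl h
    · exact Or.inr (by linarith [sub_eq_zero.mp h])
  -- sum of c = 1
  have hcsum : ∑ j, c j = 1 := by
    have : ∑ j, a.comp (B j) = ∑ j, c j • a := Finset.sum_congr rfl (fun j _ => hceq j)
    rw [hsuma, ← Finset.sum_smul] at this
    by_contra hne
    have : (∑ j, c j - 1) • a = 0 := (sub_smul _ _ _).trans (sub_eq_zero.mpr (this.symm.trans (one_smul _ _).symm))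
    rcases smul_eq_zero.mp this with h | h
    · exact hne (by linarith [sub_eq_zero.mp h])
    · exact ha0 h
  -- exists j with c j = 1
  have hex : ∃ j0, c j0 = 1 := by
    by_contra hne
    push_neg at hne
    have : ∀ j ∈ Finset.univ, c j = 0 := fun j _ =>
      (hc01 j).resolve_right (hne j)
    rw [Finset.sum_congr rfl this, Finset.sum_const_zero] at hcsum
    norm_num at hcsum
  obtain ⟨j0, hj0⟩ := hex
  have hother : ∀ j, j ≠ j0 → c j = 0 := by
    intro j hj
    rcases hc01 j with h | h
    · exact h
    · exfalso
      have := hcsum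
      rw [← Finset.add_sum_erase _ c (Finset.mem_univ j0), hj0] at this
      have hjs : j ∈ Finset.univ.erase j0 := Finset.mem_erase.mpr ⟨hj, Finset.mem_univ j⟩
      rw [← Finset.add_sum_erase _ c hjs, h] at this
      have hnonneg : (0:ℝ) ≤ ∑ x ∈ (Finset.univ.erase j0).erase j, c x :=
        Finset.sum_nonneg (fun x _ => hc0 x)
      linarith
  refine ⟨j0, ⟨by rw [hceq j0, hj0, one_smul], fun j hj => by rw [hceq j, hother j hj, zero_smul]⟩, ?_⟩
  rintro j1 ⟨h1, h2⟩
  by_contra hne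
  have := h2 j0 (Ne.symm hne)
  rw [hceq j0, hj0, one_smul] at this
  exact ha0 this
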